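/- Let D⁻ : V_p → V_{p+1} ∩ C⁰(S¹) be the discrete reconstruction operator satisfying ∫ ∂ₓD⁻[Ψ]Φ = ∫ G⁻[Ψ]Φ for all Φ ∈ V_p and (D⁻[Ψ])⁻ = Ψ⁺ at interfaces. Then for all Ψ ∈ V_p: (i) ‖Ψ − D⁻[Ψ]‖²_{L²(S¹)} ≲ ‖√(h_E^−)⟦Ψ⟧‖²_{L²(E)}, and (ii) ‖Ψ − D⁻[Ψ]‖²_{dG} ≲ ‖√(h_E^{−1})⟦Ψ⟧‖²_{L²(E)}, where the hidden constants depend only on the polynomial degree p and the local mesh-ratio bound. -/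

import Mathlib

open scoped BigOperators
noncomputable section

def prevIdx {N : ℕ} (j : Fin N) : Fin N :=
  ⟨(j.1 + (N - 1)) % N, Nat.mod_lt _ j.pos⟩

def tracePlus {N : ℕ} (nodes : Fin (N + 1) → ℝ) (f : Fin N → ℝ → ℝ) (j : Fin N) : ℝ :=
  f j (nodes j.castSucc)

def traceMinus {N : ℕ} (nodes : Fin (N + 1) → ℝ) (f : Fin N → ℝ → ℝ) (j : Fin N) : ℝ :=
  f (prevIdx j) (nodes (prevIdx j).succ)

def jmp {N : ℕ} (nodes : Fin (N + 1) → ℝ) (f : Fin N → ℝ → ℝ) (j : Fin N) : ℝ :=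
  traceMinus nodes f j - tracePlus nodes f j

/-- `f` is a broken (discontinuous) piecewise polynomial of degree ≤ p. -/
def IsPolyPiece (N p : ℕ) (f : Fin N → ℝ → ℝ) : Prop :=
  ∀ i, ∃ q : Polynomial ℝ, q.natDegree ≤ p ∧ ∀ x, f i x = q.eval x

/-- Elementwise integral Σ_K ∫_K f over the mesh. -/
def elemInt {N : ℕ} (nodes : Fin (N + 1) → ℝ) (f : Fin N → ℝ → ℝ) : ℝ :=
  ∑ i : Fin N, ∫ x in (nodes i.castSucc)..(nodes i.succ), f i x

/-- Defining property of G⁻ applied to `F`. -/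
def IsDiscGradMinus {N : ℕ} (p : ℕ) (nodes : Fin (N + 1) → ℝ)
    (F G : Fin N → ℝ → ℝ) : Prop :=
  IsPolyPiece N p G ∧
  ∀ Φ : Fin N → ℝ → ℝ, IsPolyPiece N p Φ →
    elemInt nodes (fun i x => G i x * Φ i x)
      = elemInt nodes (fun i x => deriv (F i) x * Φ i x)
        - ∑ j : Fin N, jmp nodes F j * traceMinus nodes Φ j

/-- Local element size h_i. -/
def elemSize {N : ℕ} (nodes : Fin (N + 1) → ℝ) (i : Fin N) : ℝ :=
  nodes i.succ - nodes i.castSucc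

/-- Interface mesh size h_E(x_j) = (h_{j−1} + h_j)/2. -/
def intfSize {N : ℕ} (nodes : Fin (N + 1) → ℝ) (j : Fin N) : ℝ :=
  (elemSize nodes (prevIdx j) + elemSize nodes j) / 2

/-! ### Auxiliary material -/

open Polynomial MeasureTheory intervalIntegral

def nextIdx {N : ℕ} (j : Fin N) : Fin N :=
  ⟨(j.1 + 1) % N, Nat.mod_lt _ j.pos⟩

lemma prevIdx_nextIdx {N : ℕ} (i : Fin N) : prevIdx (nextIdx i) = i := by
  have hN : 0 < N := i.pos
  apply Fin.ext
  simp only [prevIdx, nextIdx]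
  rw [Nat.mod_add_mod]
  have h : i.1 + 1 + (N - 1) = i.1 + N := by omega
  rw [h, Nat.add_mod_right]
  exact Nat.mod_eq_of_lt i.isLt

lemma nextIdx_prevIdx {N : ℕ} (j : Fin N) : nextIdx (prevIdx j) = j := by
  have hN : 0 < N := j.pos
  apply Fin.ext
  simp only [prevIdx, nextIdx]
  rw [Nat.mod_add_mod]
  have h : j.1 + (N - 1) + 1 = j.1 + N := by omega
  rw [h, Nat.add_mod_right]
  exact Nat.mod_eq_of_lt j.isLt

lemma prevIdx_bijective {N : ℕ} : Function.Bijective (prevIdx (N := N)) :=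
  Function.bijective_iff_has_inverse.mpr
    ⟨nextIdx, fun j => nextIdx_prevIdx j, fun j => prevIdx_nextIdx j⟩

lemma poly_eq_zero_of_sq_integral_zero {a b : ℝ} (hab : a < b) (q : ℝ[X])
    (h : (∫ x in a..b, (q.eval x) ^ 2) = 0) : q = 0 := by
  set f : ℝ → ℝ := fun x => (q.eval x) ^ 2 with hf
  have hcont : Continuous f := (Polynomial.continuous q).pow 2
  set F : ℝ → ℝ := fun t => ∫ x in a..t, f x with hFdef
  have hF0 : ∀ t ∈ Set.Icc a b, F t = 0 := by
    intro t ht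
    have h1 : 0 ≤ F t := intervalIntegral.integral_nonneg ht.1 (fun x _ => sq_nonneg _)
    have h2 : F t + ∫ x in t..b, f x = F b :=
      intervalIntegral.integral_add_adjacent_intervals
        (hcont.intervalIntegrable _ _) (hcont.intervalIntegrable _ _)
    have h3 : 0 ≤ ∫ x in t..b, f x :=
      intervalIntegral.integral_nonneg ht.2 (fun x _ => sq_nonneg _)
    have hFb : F b = 0 := h
    linarith
  have hroot : ∀ t ∈ Set.Ioo a b, q.eval t = 0 := by
    intro t ht
    have hd : HasDerivAt F (f t) t :=
      intervalIntegral.integral_hasDerivAt_right (hcont.intervalIntegrable _ _)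
        (hcont.stronglyMeasurableAtFilter _ _) hcont.continuousAt
    have heq : F =ᶠ[nhds t] fun _ => (0:ℝ) := by
      filter_upwards [Ioo_mem_nhds ht.1 ht.2] with y hy
      exact hF0 y (Set.Ioo_subset_Icc_self hy)
    have hd0 : HasDerivAt F 0 t := (hasDerivAt_const t (0:ℝ)).congr_of_eventuallyEq heq
    have : f t = 0 := hd.unique hd0
    exact pow_eq_zero_iff two_ne_zero |>.mp this
  apply Polynomial.eq_zero_of_infinite_isRoot
  exact Set.Infinite.mono (fun t ht => hroot t ht) (Set.Ioo_infinite hab)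

lemma mem_degreeLT_of_natDegree_le {p : ℕ} {q : ℝ[X]} (hq : q.natDegree ≤ p) :
    q ∈ Polynomial.degreeLT ℝ (p + 1) := by
  rw [Polynomial.mem_degreeLT]
  calc q.degree ≤ (q.natDegree : WithBot ℕ) := Polynomial.degree_le_natDegree
    _ < ((p + 1 : ℕ) : WithBot ℕ) := by exact_mod_cast Nat.lt_succ_of_le hq

lemma natDegree_le_of_mem_degreeLT {p : ℕ} {q : ℝ[X]} (hq : q ∈ Polynomial.degreeLT ℝ (p + 1)) :
    q.natDegree ≤ p := by
  rw [Polynomial.mem_degreeLT] at hq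
  by_cases h0 : q = 0
  · simp [h0]
  · have := (Polynomial.natDegree_lt_iff_degree_lt h0).mpr hq
    omega

lemma exists_repr (p : ℕ) : ∃ K : ℝ[X], K.natDegree ≤ p ∧
    ∀ φ : ℝ[X], φ.natDegree ≤ p →
      (∫ x in (-1:ℝ)..1, K.eval x * φ.eval x) = φ.eval 1 := by
  set V := Polynomial.degreeLT ℝ (p + 1) with hV
  haveI : FiniteDimensional ℝ V :=
    Module.Finite.equiv (Polynomial.degreeLTEquiv ℝ (p + 1)).symm
  have hint : ∀ q r : ℝ[X], IntervalIntegrable (fun x => q.eval x * r.eval x)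
      volume (-1:ℝ) 1 :=
    fun q r => ((Polynomial.continuous q).mul (Polynomial.continuous r)).intervalIntegrable _ _
  set B : V →ₗ[ℝ] Module.Dual ℝ V :=
    LinearMap.mk₂ ℝ (fun q φ => ∫ x in (-1:ℝ)..1, (q : ℝ[X]).eval x * (φ : ℝ[X]).eval x)
      (by intro m₁ m₂ n
          rw [← intervalIntegral.integral_add (hint _ _) (hint _ _)]
          simp [add_mul])
      (by intro c m n
          rw [← intervalIntegral.integral_smul]
          simp [mul_assoc])
      (by intro m n₁ n₂
          rw [← intervalIntegral.integral_add (hint _ _) (hint _ _)]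
          simp [mul_add])
      (by intro c m n
          rw [← intervalIntegral.integral_smul]
          simp only [Submodule.coe_smul, Polynomial.eval_smul, smul_eq_mul]
          congr 1; funext x; ring) with hB
  have hBapp : ∀ q φ : V, B q φ = ∫ x in (-1:ℝ)..1, (q : ℝ[X]).eval x * (φ : ℝ[X]).eval x :=
    fun q φ => rfl
  have hinj : LinearMap.ker B = ⊥ := by
    rw [LinearMap.ker_eq_bot']
    intro q hq
    have h0 : B q q = 0 := by rw [hq]; rfl
    rw [hBapp] at h0
    have : (q : ℝ[X]) = 0 := by
      apply poly_eq_zero_of_sq_integral_zero (by norm_num : (-1:ℝ) < 1)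
      rw [← h0]
      congr 1; funext x; ring
    exact Subtype.ext this
  have hsurj : Function.Surjective B := by
    rw [← LinearMap.range_eq_top,
      ← LinearMap.ker_eq_bot_iff_range_eq_top_of_finrank_eq_finrank
        (Subspace.dual_finrank_eq (V := V)).symm]
    exact hinj
  set ev1 : Module.Dual ℝ V := (Polynomial.leval (1:ℝ)).comp (Submodule.subtype V) with hev
  obtain ⟨Kv, hKv⟩ := hsurj ev1
  refine ⟨(Kv : ℝ[X]), natDegree_le_of_mem_degreeLT Kv.2, ?_⟩
  intro φ hφ
  have := congrArg (fun L : Module.Dual ℝ V => L ⟨φ, mem_degreeLT_of_natDegree_le hφ⟩) hKv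
  simpa [hBapp, hev, Polynomial.leval] using this

/-- Antiderivative of `K.eval` vanishing at `-1`. -/
def mAnti (K : ℝ[X]) : ℝ → ℝ := fun t => ∫ s in (-1:ℝ)..t, K.eval s

lemma hasDerivAt_mAnti (K : ℝ[X]) (t : ℝ) : HasDerivAt (mAnti K) (K.eval t) t :=
  intervalIntegral.integral_hasDerivAt_right
    ((Polynomial.continuous K).intervalIntegrable _ _)
    ((Polynomial.continuous K).stronglyMeasurableAtFilter _ _)
    (Polynomial.continuous K).continuousAt

lemma elem_key (p : ℕ) (K : ℝ[X]) (hKdeg : K.natDegree ≤ p)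
    (hK : ∀ φ : ℝ[X], φ.natDegree ≤ p →
      (∫ x in (-1:ℝ)..1, K.eval x * φ.eval x) = φ.eval 1)
    (a b J : ℝ) (hab : a < b) (E : ℝ[X])
    (hEdeg : E.derivative.natDegree ≤ p) (hEa : E.eval a = 0)
    (horth : ∀ φ : ℝ[X], φ.natDegree ≤ p →
      (∫ x in a..b, E.derivative.eval x * φ.eval x) = J * φ.eval b) :
    (∫ x in a..b, (E.eval x) ^ 2)
        = (b - a) * ((∫ t in (-1:ℝ)..1, (mAnti K t) ^ 2) / 2) * J ^ 2
    ∧ (∫ x in a..b, (E.derivative.eval x) ^ 2)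
        = (2 / (b - a)) * (∫ t in (-1:ℝ)..1, (K.eval t) ^ 2) * J ^ 2 := by
  have hh : (0:ℝ) < b - a := sub_pos.mpr hab
  have hhne : b - a ≠ 0 := ne_of_gt hh
  set c : ℝ := 2 / (b - a) with hc
  set d : ℝ := -(a + b) / (b - a) with hd
  have hcne : c ≠ 0 := by positivity
  have hla : c * a + d = -1 := by rw [hc, hd, div_mul_eq_mul_div, ← add_div, div_eq_iff hhne]; ring
  have hlb : c * b + d = 1 := by rw [hc, hd, div_mul_eq_mul_div, ← add_div, div_eq_iff hhne]; ring
  have sub : ∀ f : ℝ → ℝ, (∫ x in a..b, f (c * x + d))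
      = ((b - a) / 2) * ∫ t in (-1:ℝ)..1, f t := by
    intro f
    rw [intervalIntegral.integral_comp_mul_add f hcne d, hla, hlb, smul_eq_mul]
    congr 1
    rw [hc]; field_simp
  have srep : ∀ φ : ℝ[X], φ.natDegree ≤ p →
      (∫ x in a..b, (c * K.eval (c * x + d)) * φ.eval x) = φ.eval b := by
    intro φ hφ
    set ψ : ℝ[X] := φ.comp (Polynomial.C ((b - a) / 2) * Polynomial.X
      + Polynomial.C ((a + b) / 2)) with hψ
    have hlin : (Polynomial.C ((b - a) / 2) * Polynomial.X
        + Polynomial.C ((a + b) / 2)).natDegree ≤ 1 := by compute_degree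
    have hψdeg : ψ.natDegree ≤ p := by
      calc ψ.natDegree ≤ φ.natDegree * (Polynomial.C ((b - a) / 2) * Polynomial.X
            + Polynomial.C ((a + b) / 2)).natDegree := Polynomial.natDegree_comp_le
        _ ≤ p * 1 := Nat.mul_le_mul hφ hlin
        _ = p := mul_one p
    have hψeval : ∀ t, ψ.eval t = φ.eval ((b - a) / 2 * t + (a + b) / 2) := by
      intro t; simp [hψ, Polynomial.eval_comp]
    have key : ∀ x, (b - a) / 2 * (c * x + d) + (a + b) / 2 = x := by
      intro x; rw [hc, hd]; field_simp; ring
    have h1 : (∫ x in a..b, (c * K.eval (c * x + d)) * φ.eval x)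
        = ∫ x in a..b, (fun t => c * (K.eval t * ψ.eval t)) (c * x + d) := by
      congr 1; funext x
      simp only []
      rw [hψeval, key]; ring
    rw [h1, sub (fun t => c * (K.eval t * ψ.eval t)),
      intervalIntegral.integral_const_mul, hK ψ hψdeg, hψeval]
    rw [hc]
    have : (b - a) / 2 * 1 + (a + b) / 2 = b := by ring
    rw [this]; field_simp
  set R : ℝ[X] := (J * c) • (K.comp (Polynomial.C c * Polynomial.X + Polynomial.C d)) with hR
  have hReval : ∀ x, R.eval x = J * c * K.eval (c * x + d) := by
    intro x; simp [hR, Polynomial.eval_comp, mul_assoc]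
  have hlin2 : (Polynomial.C c * Polynomial.X + Polynomial.C d).natDegree ≤ 1 := by
    compute_degree
  have hRdeg : R.natDegree ≤ p := by
    calc R.natDegree ≤ (K.comp (Polynomial.C c * Polynomial.X + Polynomial.C d)).natDegree :=
          Polynomial.natDegree_smul_le _ _
      _ ≤ K.natDegree * 1 := le_trans Polynomial.natDegree_comp_le (Nat.mul_le_mul_left _ hlin2)
      _ ≤ p := by simpa using hKdeg
  have hQ0 : E.derivative - R = 0 := by
    apply poly_eq_zero_of_sq_integral_zero hab
    have hdeg : (E.derivative - R).natDegree ≤ p :=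
      le_trans (Polynomial.natDegree_sub_le _ _) (max_le hEdeg hRdeg)
    have h2 : (∫ x in a..b, (E.derivative - R).eval x * (E.derivative - R).eval x) = 0 := by
      have hi1 : IntervalIntegrable (fun x => E.derivative.eval x * (E.derivative - R).eval x)
          volume a b :=
        ((Polynomial.continuous _).mul (Polynomial.continuous _)).intervalIntegrable _ _
      have hi2 : IntervalIntegrable (fun x => R.eval x * (E.derivative - R).eval x)
          volume a b :=
        ((Polynomial.continuous _).mul (Polynomial.continuous _)).intervalIntegrable _ _
      have hsplit : (∫ x in a..b, (E.derivative - R).eval x * (E.derivative - R).eval x)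
          = (∫ x in a..b, E.derivative.eval x * (E.derivative - R).eval x)
            - ∫ x in a..b, R.eval x * (E.derivative - R).eval x := by
        rw [← intervalIntegral.integral_sub hi1 hi2]
        congr 1; funext x; simp [Polynomial.eval_sub]; ring
      rw [hsplit, horth _ hdeg]
      have hc2 : (∫ x in a..b, R.eval x * (E.derivative - R).eval x)
          = J * (E.derivative - R).eval b := by
        have : (∫ x in a..b, R.eval x * (E.derivative - R).eval x)
            = J * ∫ x in a..b, (c * K.eval (c * x + d)) * (E.derivative - R).eval x := by
          rw [← intervalIntegral.integral_const_mul]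
          congr 1; funext x; rw [hReval]; ring
        rw [this, srep _ hdeg]
      rw [hc2]; ring
    rw [← h2]; congr 1; funext x; ring
  have hE' : ∀ x, E.derivative.eval x = J * c * K.eval (c * x + d) := by
    intro x
    have := sub_eq_zero.mp hQ0
    rw [this, hReval]
  have hEval : ∀ x, E.eval x = J * mAnti K (c * x + d) := by
    have hg : ∀ x, HasDerivAt (fun x => E.eval x - J * mAnti K (c * x + d)) 0 x := by
      intro x
      have h1 : HasDerivAt (fun x => E.eval x) (E.derivative.eval x) x := E.hasDerivAt x
      have hl : HasDerivAt (fun x => c * x + d) c x := by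
        simpa using ((hasDerivAt_id x).const_mul c).add_const d
      have h2 : HasDerivAt (fun x => mAnti K (c * x + d)) (K.eval (c * x + d) * c) x :=
        by have := (hasDerivAt_mAnti K (c * x + d)).comp x hl; exact this
      have h3 := h1.sub ((h2.const_mul J))
      rw [show E.derivative.eval x - J * (K.eval (c * x + d) * c) = 0 by rw [hE']; ring] at h3
      exact h3
    intro x
    have hconst := is_const_of_deriv_eq_zero
      (fun y => (hg y).differentiableAt) (fun y => (hg y).deriv) x a
    have hga : E.eval a - J * mAnti K (c * a + d) = 0 := by
      rw [hEa, hla]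
      simp [mAnti]
    linarith [hconst, hga]
  constructor
  · have h1 : (∫ x in a..b, (E.eval x) ^ 2)
        = ∫ x in a..b, (fun t => (J * mAnti K t) ^ 2) (c * x + d) := by
      congr 1; funext x; simp only []; rw [hEval]
    rw [h1, sub (fun t => (J * mAnti K t) ^ 2)]
    have : (∫ t in (-1:ℝ)..1, (J * mAnti K t) ^ 2)
        = J ^ 2 * ∫ t in (-1:ℝ)..1, (mAnti K t) ^ 2 := by
      rw [← intervalIntegral.integral_const_mul]
      congr 1; funext t; ring
    rw [this]; ring
  · have h1 : (∫ x in a..b, (E.derivative.eval x) ^ 2)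
        = ∫ x in a..b, (fun t => (J * c * K.eval t) ^ 2) (c * x + d) := by
      congr 1; funext x; simp only []; rw [hE']
    rw [h1, sub (fun t => (J * c * K.eval t) ^ 2)]
    have : (∫ t in (-1:ℝ)..1, (J * c * K.eval t) ^ 2)
        = (J * c) ^ 2 * ∫ t in (-1:ℝ)..1, (K.eval t) ^ 2 := by
      rw [← intervalIntegral.integral_const_mul]
      congr 1; funext t; ring
    rw [this, hc]
    field_simp

lemma arith_ii (cK C ρ hp hcur u : ℝ) (hcK : 0 ≤ cK) (hu : 0 ≤ u) (hp0 : 0 < hp)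
    (hc0 : 0 < hcur) (hrat : hcur ≤ ρ * hp) (hC : cK * (1 + ρ) + 1 ≤ C) :
    2 / hp * cK * u + u / ((hp + hcur) / 2) ≤ C * (u / ((hp + hcur) / 2)) := by
  have hs0 : 0 < (hp + hcur) / 2 := by positivity
  have e1 : 2 / hp * cK * u + u / ((hp + hcur) / 2)
      = (2 * cK * u * ((hp + hcur) / 2) + u * hp) / (hp * ((hp + hcur) / 2)) := by
    field_simp
  have e2 : C * (u / ((hp + hcur) / 2)) = (C * u * hp) / (hp * ((hp + hcur) / 2)) := by
    field_simp
  rw [e1, e2, div_le_div_iff₀ (by positivity) (by positivity)]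
  have key : 2 * ((hp + hcur) / 2) ≤ (1 + ρ) * hp := by linarith
  have hx1 : cK * u * (2 * ((hp + hcur) / 2)) ≤ cK * u * ((1 + ρ) * hp) :=
    mul_le_mul_of_nonneg_left key (mul_nonneg hcK hu)
  have hx2 : (cK * (1 + ρ) + 1) * (u * hp) ≤ C * (u * hp) :=
    mul_le_mul_of_nonneg_right hC (mul_nonneg hu hp0.le)
  nlinarith [mul_pos hp0 (show (0:ℝ) < (hp + hcur) / 2 by positivity)]

/-- Approximation properties of the discrete reconstruction
operator D⁻ : V_p → V_{p+1} ∩ C⁰(S¹):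
(i)  ‖Ψ − D⁻[Ψ]‖²_{L²(S¹)} ≲ ‖√(h_E⁻)⟦Ψ⟧‖²_{L²(E)},
(ii) ‖Ψ − D⁻[Ψ]‖²_{dG} ≲ ‖√(h_E⁻¹)⟦Ψ⟧‖²_{L²(E)},
with constants depending only on p and the local mesh-ratio bound ρ. -/
theorem discrete_reconstruction_approximation (p : ℕ) (ρ : ℝ) (hρ : 1 ≤ ρ) :
    ∃ C : ℝ, 0 < C ∧
    ∀ (N : ℕ), 0 < N →
    ∀ (nodes : Fin (N + 1) → ℝ), StrictMono nodes →
      nodes 0 = 0 → nodes (Fin.last N) = 1 →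
      -- bounded ratio of adjacent element sizes
      (∀ j : Fin N, elemSize nodes (prevIdx j) ≤ ρ * elemSize nodes j
        ∧ elemSize nodes j ≤ ρ * elemSize nodes (prevIdx j)) →
    ∀ (Ψ GΨ DΨ : Fin N → ℝ → ℝ),
      IsPolyPiece N p Ψ →
      IsDiscGradMinus p nodes Ψ GΨ →
      -- D⁻[Ψ] ∈ V_{p+1}, continuous across interfaces (including periodic wrap)
      IsPolyPiece N (p + 1) DΨ →
      (∀ j : Fin N, jmp nodes DΨ j = 0) →
      -- ∫ ∂ₓ D⁻[Ψ] Φ = ∫ G⁻[Ψ] Φ for all Φ ∈ V_p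
      (∀ Φ : Fin N → ℝ → ℝ, IsPolyPiece N p Φ →
        elemInt nodes (fun i x => deriv (DΨ i) x * Φ i x)
          = elemInt nodes (fun i x => GΨ i x * Φ i x)) →
      -- (D⁻[Ψ])⁻ = Ψ⁺ at interfaces
      (∀ j : Fin N, traceMinus nodes DΨ j = tracePlus nodes Ψ j) →
      -- (i)
      ((∑ i : Fin N, ∫ x in (nodes i.castSucc)..(nodes i.succ),
          (Ψ i x - DΨ i x) ^ 2)
        ≤ C * ∑ j : Fin N, elemSize nodes (prevIdx j) * (jmp nodes Ψ j) ^ 2)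
      -- (ii)
      ∧ ((∑ i : Fin N, ∫ x in (nodes i.castSucc)..(nodes i.succ),
            (deriv (Ψ i) x - deriv (DΨ i) x) ^ 2)
          + ∑ j : Fin N, (jmp nodes (fun i x => Ψ i x - DΨ i x) j) ^ 2
              / intfSize nodes j
        ≤ C * ∑ j : Fin N, (jmp nodes Ψ j) ^ 2 / intfSize nodes j) := by
  obtain ⟨K, hKdeg, hK⟩ := exists_repr p
  set cM : ℝ := ∫ t in (-1:ℝ)..1, (mAnti K t) ^ 2 with hcM
  set cK : ℝ := ∫ t in (-1:ℝ)..1, (K.eval t) ^ 2 with hcK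
  have hcM0 : 0 ≤ cM :=
    intervalIntegral.integral_nonneg (by norm_num) (fun x _ => sq_nonneg _)
  have hcK0 : 0 ≤ cK :=
    intervalIntegral.integral_nonneg (by norm_num) (fun x _ => sq_nonneg _)
  refine ⟨cM / 2 + cK * (1 + ρ) + 1, by nlinarith, ?_⟩
  intro N hN nodes hmono h0 h1 hratio Ψ GΨ DΨ hΨpoly hGrad hDpoly hDcont hDode hDtrace
  set C : ℝ := cM / 2 + cK * (1 + ρ) + 1 with hC
  have hsize : ∀ i : Fin N, 0 < elemSize nodes i := by
    intro i
    exact sub_pos.mpr (hmono (Fin.castSucc_lt_succ (i := i)))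
  -- the core element-wise identity
  have key : ∀ i : Fin N,
      (∫ x in (nodes i.castSucc)..(nodes i.succ), (Ψ i x - DΨ i x) ^ 2)
        = elemSize nodes i * (cM / 2) * (jmp nodes Ψ (nextIdx i)) ^ 2
    ∧ (∫ x in (nodes i.castSucc)..(nodes i.succ),
          (deriv (Ψ i) x - deriv (DΨ i) x) ^ 2)
        = (2 / elemSize nodes i) * cK * (jmp nodes Ψ (nextIdx i)) ^ 2 := by
    intro i
    obtain ⟨qi, hqideg, hqi⟩ := hΨpoly i
    obtain ⟨ri, hrideg, hri⟩ := hDpoly i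
    have hΨfun : Ψ i = fun x => qi.eval x := funext hqi
    have hDfun : DΨ i = fun x => ri.eval x := funext hri
    set a := nodes i.castSucc with ha
    set b := nodes i.succ with hb
    have hab : a < b := hmono (Fin.castSucc_lt_succ (i := i))
    set E : ℝ[X] := qi - ri with hE
    have hEeval : ∀ x, E.eval x = Ψ i x - DΨ i x := by
      intro x; rw [hqi, hri]; simp [hE]
    have hEdeg : E.derivative.natDegree ≤ p := by
      have h1 : E.natDegree ≤ p + 1 :=
        le_trans (Polynomial.natDegree_sub_le _ _)
          (max_le (hqideg.trans (Nat.le_succ p)) hrideg)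
      exact le_trans (Polynomial.natDegree_derivative_le E) (by omega)
    have hDa : DΨ i a = Ψ i a := by
      have h2 := hDcont i
      have h3 := hDtrace i
      simp only [jmp, tracePlus] at h2 h3 ⊢
      rw [h3] at h2
      linarith
    have hEa : E.eval a = 0 := by rw [hEeval, hDa]; ring
    have hderivΨ : ∀ x, deriv (Ψ i) x = qi.derivative.eval x := by
      intro x; rw [hΨfun]; exact Polynomial.deriv qi
    have hderivD : ∀ x, deriv (DΨ i) x = ri.derivative.eval x := by
      intro x; rw [hDfun]; exact Polynomial.deriv ri
    have hE'eval : ∀ x, E.derivative.eval x = deriv (Ψ i) x - deriv (DΨ i) x := by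
      intro x
      rw [hderivΨ, hderivD, hE]
      simp
    have horth : ∀ φ : ℝ[X], φ.natDegree ≤ p →
        (∫ x in a..b, E.derivative.eval x * φ.eval x)
          = jmp nodes Ψ (nextIdx i) * φ.eval b := by
      intro φ hφ
      set Φ : Fin N → ℝ → ℝ := fun k x => if k = i then φ.eval x else 0 with hΦdef
      have hΦpoly : IsPolyPiece N p Φ := by
        intro k
        by_cases hk : k = i
        · exact ⟨φ, hφ, fun x => by simp [hΦdef, hk]⟩
        · exact ⟨0, by simp, fun x => by simp [hΦdef, hk]⟩
      have hred : ∀ F : Fin N → ℝ → ℝ, elemInt nodes (fun k x => F k x * Φ k x)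
          = ∫ x in a..b, F i x * φ.eval x := by
        intro F
        unfold elemInt
        rw [Finset.sum_eq_single i]
        · simp [hΦdef, ha, hb]
        · intro k _ hk; simp [hΦdef, hk]
        · intro hi; exact absurd (Finset.mem_univ i) hi
      have htr : (∑ j : Fin N, jmp nodes Ψ j * traceMinus nodes Φ j)
          = jmp nodes Ψ (nextIdx i) * φ.eval b := by
        rw [Finset.sum_eq_single (nextIdx i)]
        · congr 1
          simp [traceMinus, hΦdef, prevIdx_nextIdx, hb]
        · intro j _ hj
          have hpj : prevIdx j ≠ i := by
            intro h
            exact hj (by rw [← h, nextIdx_prevIdx])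
          simp [traceMinus, hΦdef, hpj]
        · intro h; exact absurd (Finset.mem_univ _) h
      have e1 := hGrad.2 Φ hΦpoly
      have e2 := hDode Φ hΦpoly
      rw [hred GΨ, hred (fun k x => deriv (Ψ k) x), htr] at e1
      rw [hred (fun k x => deriv (DΨ k) x), hred GΨ] at e2
      have hsplit : (∫ x in a..b, E.derivative.eval x * φ.eval x)
          = (∫ x in a..b, deriv (Ψ i) x * φ.eval x)
            - ∫ x in a..b, deriv (DΨ i) x * φ.eval x := by
        have hi1 : IntervalIntegrable (fun x => deriv (Ψ i) x * φ.eval x) volume a b := by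
          have : (fun x => deriv (Ψ i) x * φ.eval x)
              = fun x => qi.derivative.eval x * φ.eval x := by
            funext x; rw [hderivΨ]
          rw [this]
          exact ((Polynomial.continuous _).mul (Polynomial.continuous _)).intervalIntegrable _ _
        have hi2 : IntervalIntegrable (fun x => deriv (DΨ i) x * φ.eval x) volume a b := by
          have : (fun x => deriv (DΨ i) x * φ.eval x)
              = fun x => ri.derivative.eval x * φ.eval x := by
            funext x; rw [hderivD]
          rw [this]
          exact ((Polynomial.continuous _).mul (Polynomial.continuous _)).intervalIntegrable _ _
        rw [← intervalIntegral.integral_sub hi1 hi2]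
        congr 1; funext x
        rw [hE'eval]; ring
      rw [hsplit]
      linarith
    obtain ⟨hI1, hI2⟩ := elem_key p K hKdeg hK a b (jmp nodes Ψ (nextIdx i)) hab E hEdeg hEa horth
    constructor
    · have : (∫ x in a..b, (Ψ i x - DΨ i x) ^ 2) = ∫ x in a..b, (E.eval x) ^ 2 := by
        congr 1; funext x; rw [hEeval]
      rw [this, hI1]
      have : elemSize nodes i = b - a := rfl
      rw [this, hcM]
    · have : (∫ x in a..b, (deriv (Ψ i) x - deriv (DΨ i) x) ^ 2)
          = ∫ x in a..b, (E.derivative.eval x) ^ 2 := by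
        congr 1; funext x; rw [hE'eval]
      rw [this, hI2]
      have : elemSize nodes i = b - a := rfl
      rw [this, hcK]
  -- reindexing
  have hreidx : ∀ G : Fin N → ℝ, (∑ i : Fin N, G i) = ∑ j : Fin N, G (prevIdx j) :=
    fun G => (Function.Bijective.sum_comp prevIdx_bijective G).symm
  constructor
  · -- part (i)
    have hsum : (∑ i : Fin N, ∫ x in (nodes i.castSucc)..(nodes i.succ),
        (Ψ i x - DΨ i x) ^ 2)
        = ∑ j : Fin N, elemSize nodes (prevIdx j) * (cM / 2) * (jmp nodes Ψ j) ^ 2 := by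
      rw [Finset.sum_congr rfl (fun i _ => (key i).1),
        hreidx (fun i => elemSize nodes i * (cM / 2) * (jmp nodes Ψ (nextIdx i)) ^ 2)]
      exact Finset.sum_congr rfl (fun j _ => by rw [nextIdx_prevIdx])
    rw [hsum, Finset.mul_sum]
    apply Finset.sum_le_sum
    intro j _
    have h1 : 0 < elemSize nodes (prevIdx j) := hsize _
    have h2 : 0 ≤ (jmp nodes Ψ j) ^ 2 := sq_nonneg _
    have h3 : cM / 2 ≤ C := by rw [hC]; nlinarith
    nlinarith [mul_nonneg h1.le h2]
  · -- part (ii)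
    have hjmpE : ∀ j : Fin N, jmp nodes (fun i x => Ψ i x - DΨ i x) j = jmp nodes Ψ j := by
      intro j
      have h2 := hDcont j
      simp only [jmp, traceMinus, tracePlus] at h2 ⊢
      linarith
    have hsum2 : (∑ i : Fin N, ∫ x in (nodes i.castSucc)..(nodes i.succ),
        (deriv (Ψ i) x - deriv (DΨ i) x) ^ 2)
        = ∑ j : Fin N, (2 / elemSize nodes (prevIdx j)) * cK * (jmp nodes Ψ j) ^ 2 := by
      rw [Finset.sum_congr rfl (fun i _ => (key i).2),
        hreidx (fun i => (2 / elemSize nodes i) * cK * (jmp nodes Ψ (nextIdx i)) ^ 2)]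
      exact Finset.sum_congr rfl (fun j _ => by rw [nextIdx_prevIdx])
    rw [hsum2, Finset.mul_sum, ← Finset.sum_add_distrib]
    apply Finset.sum_le_sum
    intro j _
    rw [hjmpE j]
    have h1 : 0 < elemSize nodes (prevIdx j) := hsize _
    have h2 : 0 < elemSize nodes j := hsize _
    have h3 := (hratio j).2
    have hCineq : cK * (1 + ρ) + 1 ≤ C := by rw [hC]; nlinarith
    have := arith_ii cK C ρ (elemSize nodes (prevIdx j)) (elemSize nodes j)
      ((jmp nodes Ψ j) ^ 2) hcK0 (sq_nonneg _) h1 h2 h3 hCineq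
    simpa [intfSize] using this
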